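/- Let G be a finite simple graph without isolated vertices that contains no cycle of length 4 (equivalently, any two distinct vertices have at most one common neighbor). Then the map defined on the vertices of sd B(G) by sending A′ ⊎ A″ to ∅ ⊎ CN(A′) if |A′| ≥ 2, to CN(A″) ⊎ ∅ if |A″| ≥ 2, and to A′ ⊎ A″ otherwise, is a well-defined simplicial ℤ₂-map from sd B(G) to B(G) whose image is contained in a subcomplex of B(G) of dimension at most 1. -/

import Mathlib

open Finset

attribute [local instance] Classical.propDecidable

noncomputable section

variable {V : Type*}

/-- The set `CN(A)` of common neighbors of `A` in `G` (so `CN(∅) = V`). -/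
def CN [Fintype V] (G : SimpleGraph V) (A : Finset V) : Finset V :=
  Finset.univ.filter fun v => ∀ a ∈ A, G.Adj a v

/-- The shore of `S ⊆ V × {1,2}` lying over `b` (with `false` for the first copy of `V`
and `true` for the second). -/
def shore (S : Finset (V × Bool)) (b : Bool) : Finset V :=
  (S.filter fun p => p.2 = b).image Prod.fst

/-- `A' ⊎ A'' := (A' × {1}) ∪ (A'' × {2})`, with `false` for `1` and `true` for `2`. -/
def joinPair (A' A'' : Finset V) : Finset (V × Bool) :=
  A'.image (fun v => (v, false)) ∪ A''.image (fun v => (v, true))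

/-- The ℤ₂-action on subsets of `V × {1,2}`: interchange the two copies of `V`,
i.e. `A' ⊎ A'' ↦ A'' ⊎ A'`. -/
def swapFinset (S : Finset (V × Bool)) : Finset (V × Bool) :=
  S.image fun p => (p.1, !p.2)

/-- `G[A', A'']` is complete: every vertex of `A'` is adjacent to every vertex of `A''`. -/
def IsCompleteBip (G : SimpleGraph V) (A' A'' : Finset V) : Prop :=
  ∀ a ∈ A', ∀ b ∈ A'', G.Adj a b

/-- Simplices of the box complex `B(G)`: sets `A' ⊎ A''` with `A'`, `A''` disjoint,
`G[A', A'']` complete and `CN(A') ≠ ∅ ≠ CN(A'')`. -/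
def BoxSimplex [Fintype V] (G : SimpleGraph V) (S : Finset (V × Bool)) : Prop :=
  Disjoint (shore S false) (shore S true) ∧
  IsCompleteBip G (shore S false) (shore S true) ∧
  (CN G (shore S false)).Nonempty ∧ (CN G (shore S true)).Nonempty

/-- Simplices of the box complex `B₀(G)`: sets `A' ⊎ A''` with `A'`, `A''` disjoint and
`G[A', A'']` complete. -/
def Box0Simplex (G : SimpleGraph V) (S : Finset (V × Bool)) : Prop :=
  Disjoint (shore S false) (shore S true) ∧
  IsCompleteBip G (shore S false) (shore S true)

/-- Vertices of `B₁(G)`: sets `A' ⊎ A''` with `A'`, `A''` nonempty, disjoint and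
`G[A', A'']` complete. -/
def B1Vertex (G : SimpleGraph V) (S : Finset (V × Bool)) : Prop :=
  (shore S false).Nonempty ∧ (shore S true).Nonempty ∧
  Disjoint (shore S false) (shore S true) ∧
  IsCompleteBip G (shore S false) (shore S true)

/-- Simplices of the order complex `B₁(G)`: chains of vertices of `B₁(G)` under inclusion. -/
def B1Simplex (G : SimpleGraph V) (C : Finset (Finset (V × Bool))) : Prop :=
  (∀ T ∈ C, B1Vertex G T) ∧ IsChain (· ⊆ ·) (C : Set (Finset (V × Bool)))

/-- Simplices of the barycentric subdivision `sd K` of the complex `K` whose simplices are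
given by the predicate `P`: chains of nonempty simplices of `K` under inclusion. -/
def sdSimplex {γ : Type*} (P : Finset γ → Prop) (C : Finset (Finset γ)) : Prop :=
  (∀ S ∈ C, P S ∧ S.Nonempty) ∧ IsChain (· ⊆ ·) (C : Set (Finset γ))

/-- The retraction map on vertices of `sd B(G)` (nonempty simplices of `B(G)`):
`A' ⊎ A'' ↦ ∅ ⊎ CN(A')` if `|A'| ≥ 2`, `A' ⊎ A'' ↦ CN(A'') ⊎ ∅` if `|A''| ≥ 2`,
and `A' ⊎ A'' ↦ A' ⊎ A''` otherwise. -/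
def retractMap [Fintype V] (G : SimpleGraph V) (T : Finset (V × Bool)) :
    Finset (V × Bool) :=
  if 2 ≤ (shore T false).card then joinPair ∅ (CN G (shore T false))
  else if 2 ≤ (shore T true).card then joinPair (CN G (shore T true)) ∅
  else T

section Helpers

lemma mem_shore {S : Finset (V × Bool)} {b : Bool} {v : V} :
    v ∈ shore S b ↔ (v, b) ∈ S := by
  simp only [shore, mem_image, mem_filter]
  constructor
  · rintro ⟨⟨x, c⟩, ⟨hx, rfl⟩, rfl⟩; exact hx
  · intro h; exact ⟨(v, b), ⟨h, rfl⟩, rfl⟩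

lemma mem_CN [Fintype V] {G : SimpleGraph V} {A : Finset V} {v : V} :
    v ∈ CN G A ↔ ∀ a ∈ A, G.Adj a v := by simp [CN]

lemma shore_mono {S T : Finset (V × Bool)} (h : S ⊆ T) (b : Bool) :
    shore S b ⊆ shore T b := fun v hv => mem_shore.mpr (h (mem_shore.mp hv))

lemma CN_anti [Fintype V] {G : SimpleGraph V} {A B : Finset V} (h : A ⊆ B) :
    CN G B ⊆ CN G A := fun v hv => mem_CN.mpr fun a ha => mem_CN.mp hv a (h ha)

lemma mem_joinPair {A B : Finset V} {v : V} {b : Bool} :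
    (v, b) ∈ joinPair A B ↔ (b = false ∧ v ∈ A) ∨ (b = true ∧ v ∈ B) := by
  simp only [joinPair, mem_union, mem_image, Prod.ext_iff]
  constructor
  · rintro (⟨x, hx, rfl, rfl⟩ | ⟨x, hx, rfl, rfl⟩)
    · exact Or.inl ⟨rfl, hx⟩
    · exact Or.inr ⟨rfl, hx⟩
  · rintro (⟨rfl, hv⟩ | ⟨rfl, hv⟩)
    · exact Or.inl ⟨v, hv, rfl, rfl⟩
    · exact Or.inr ⟨v, hv, rfl, rfl⟩

lemma shore_joinPair_false (A B : Finset V) : shore (joinPair A B) false = A := by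
  ext v; rw [mem_shore, mem_joinPair]; simp

lemma shore_joinPair_true (A B : Finset V) : shore (joinPair A B) true = B := by
  ext v; rw [mem_shore, mem_joinPair]; simp

lemma mem_swapFinset {S : Finset (V × Bool)} {v : V} {b : Bool} :
    (v, b) ∈ swapFinset S ↔ (v, !b) ∈ S := by
  simp only [swapFinset, mem_image, Prod.ext_iff]
  constructor
  · rintro ⟨⟨x, c⟩, hx, rfl, rfl⟩; simpa using hx
  · intro h; exact ⟨(v, !b), h, rfl, by simp⟩

lemma shore_swapFinset (S : Finset (V × Bool)) (b : Bool) :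
    shore (swapFinset S) b = shore S (!b) := by
  ext v; rw [mem_shore, mem_shore, mem_swapFinset]

lemma swapFinset_joinPair (A B : Finset V) :
    swapFinset (joinPair A B) = joinPair B A := by
  ext ⟨v, b⟩; rw [mem_swapFinset, mem_joinPair, mem_joinPair]; cases b <;> simp

lemma card_shore (S : Finset (V × Bool)) (b : Bool) :
    (shore S b).card = (S.filter fun p => p.2 = b).card := by
  apply Finset.card_image_of_injOn
  intro p hp q hq hpq
  have hp2 := (mem_filter.mp hp).2
  have hq2 := (mem_filter.mp hq).2
  exact Prod.ext hpq (hp2.trans hq2.symm)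

lemma card_shores (S : Finset (V × Bool)) :
    (shore S false).card + (shore S true).card = S.card := by
  rw [card_shore, card_shore]
  rw [← Finset.card_filter_add_card_filter_not (s := S) (p := fun p => p.2 = false)]
  congr 1
  apply Finset.card_nbij' id id <;> intro a ha <;>
    simp only [mem_coe, mem_filter, id] at * <;>
    exact ⟨ha.1, by cases h : a.2 <;> simp [h] at ha ⊢⟩

variable [Fintype V] {G : SimpleGraph V}

lemma CN_card_le_one
    (hC4 : ∀ u v : V, u ≠ v → ∀ w₁ w₂ : V,
      G.Adj u w₁ → G.Adj v w₁ → G.Adj u w₂ → G.Adj v w₂ → w₁ = w₂)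
    {A : Finset V} (hA : 2 ≤ A.card) : (CN G A).card ≤ 1 := by
  obtain ⟨u, hu, v, hv, huv⟩ := Finset.one_lt_card.mp hA
  apply Finset.card_le_one.mpr
  intro w₁ h₁ w₂ h₂
  exact hC4 u v huv w₁ w₂ (mem_CN.mp h₁ u hu) (mem_CN.mp h₁ v hv)
    (mem_CN.mp h₂ u hu) (mem_CN.mp h₂ v hv)

lemma CN_nonempty_small [Nonempty V] (hiso : ∀ v : V, ∃ u, G.Adj v u)
    {A : Finset V} (h : A.card ≤ 1) : (CN G A).Nonempty := by
  rcases A.eq_empty_or_nonempty with rfl | ⟨w, hw⟩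
  · exact ⟨Classical.arbitrary V, mem_CN.mpr (by simp)⟩
  · obtain ⟨u, hu⟩ := hiso w
    refine ⟨u, mem_CN.mpr fun a ha => ?_⟩
    have : a = w := Finset.card_le_one.mp h a ha w hw
    subst this; exact hu

lemma shore_true_subset_CN {T : Finset (V × Bool)} (hT : BoxSimplex G T) :
    shore T true ⊆ CN G (shore T false) := fun b hb =>
  mem_CN.mpr fun a ha => hT.2.1 a ha b hb

lemma shore_false_subset_CN {T : Finset (V × Bool)} (hT : BoxSimplex G T) :
    shore T false ⊆ CN G (shore T true) := fun a ha =>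
  mem_CN.mpr fun b hb => (hT.2.1 a ha b hb).symm

lemma not_both_big
    (hC4 : ∀ u v : V, u ≠ v → ∀ w₁ w₂ : V,
      G.Adj u w₁ → G.Adj v w₁ → G.Adj u w₂ → G.Adj v w₂ → w₁ = w₂)
    {T : Finset (V × Bool)} (hT : BoxSimplex G T)
    (h1 : 2 ≤ (shore T false).card) : (shore T true).card ≤ 1 :=
  le_trans (Finset.card_le_card (shore_true_subset_CN hT)) (CN_card_le_one hC4 h1)

variable [Nonempty V]

lemma retract_single (hiso : ∀ v : V, ∃ u, G.Adj v u)
    (hC4 : ∀ u v : V, u ≠ v → ∀ w₁ w₂ : V,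
      G.Adj u w₁ → G.Adj v w₁ → G.Adj u w₂ → G.Adj v w₂ → w₁ = w₂)
    {T : Finset (V × Bool)} (hT : BoxSimplex G T) (hne : T.Nonempty) :
    BoxSimplex G (retractMap G T) ∧ (retractMap G T).Nonempty ∧
      (retractMap G T).card ≤ 2 := by
  unfold retractMap
  split_ifs with h1 h2
  · -- big false shore
    have hcard : (CN G (shore T false)).card ≤ 1 := CN_card_le_one hC4 h1
    have hne' := hT.2.2.1
    refine ⟨⟨?_, ?_, ?_, ?_⟩, ?_, ?_⟩
    · rw [shore_joinPair_false]; exact disjoint_empty_left _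
    · rw [shore_joinPair_false]; intro a ha; exact absurd ha (notMem_empty a)
    · rw [shore_joinPair_false]
      exact ⟨Classical.arbitrary V, mem_CN.mpr (by simp)⟩
    · rw [shore_joinPair_true]
      exact CN_nonempty_small hiso hcard
    · obtain ⟨w, hw⟩ := hne'
      exact ⟨(w, true), mem_joinPair.mpr (Or.inr ⟨rfl, hw⟩)⟩
    · rw [← card_shores, shore_joinPair_false, shore_joinPair_true]
      simpa using hcard.trans one_le_two
  · -- big true shore
    have hcard : (CN G (shore T true)).card ≤ 1 := by
      apply CN_card_le_one hC4 h2
    have hne' := hT.2.2.2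
    refine ⟨⟨?_, ?_, ?_, ?_⟩, ?_, ?_⟩
    · rw [shore_joinPair_true]; exact disjoint_empty_right _
    · rw [shore_joinPair_true]; intro a _ b hb; exact absurd hb (notMem_empty b)
    · rw [shore_joinPair_false]
      exact CN_nonempty_small hiso hcard
    · rw [shore_joinPair_true]
      exact ⟨Classical.arbitrary V, mem_CN.mpr (by simp)⟩
    · obtain ⟨w, hw⟩ := hne'
      exact ⟨(w, false), mem_joinPair.mpr (Or.inl ⟨rfl, hw⟩)⟩
    · rw [← card_shores, shore_joinPair_false, shore_joinPair_true]
      simpa using hcard.trans one_le_two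
  · refine ⟨hT, hne, ?_⟩
    rw [← card_shores]
    omega

lemma retract_equivariant
    (hC4 : ∀ u v : V, u ≠ v → ∀ w₁ w₂ : V,
      G.Adj u w₁ → G.Adj v w₁ → G.Adj u w₂ → G.Adj v w₂ → w₁ = w₂)
    {T : Finset (V × Bool)} (hT : BoxSimplex G T) :
    retractMap G (swapFinset T) = swapFinset (retractMap G T) := by
  unfold retractMap
  rw [shore_swapFinset, shore_swapFinset]
  simp only [Bool.not_false, Bool.not_true]
  by_cases h1 : 2 ≤ (shore T false).card
  · have h2 : ¬ 2 ≤ (shore T true).card := by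
      have := not_both_big hC4 hT h1; omega
    rw [if_neg h2, if_pos h1, if_pos h1, swapFinset_joinPair]
  · by_cases h2 : 2 ≤ (shore T true).card
    · rw [if_pos h2, if_neg h1, if_pos h2, swapFinset_joinPair]
    · rw [if_neg h2, if_neg h1, if_neg h1, if_neg h2]

lemma shore_empty (b : Bool) : shore (∅ : Finset (V × Bool)) b = ∅ := by simp [shore]

omit [Nonempty V] in
lemma chain_top {𝒞 : Finset (Finset (V × Bool))} (hne : 𝒞.Nonempty)
    (hchain : IsChain (· ⊆ ·) (𝒞 : Set (Finset (V × Bool)))) :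
    ∃ M ∈ 𝒞, ∀ T ∈ 𝒞, T ⊆ M := by
  obtain ⟨M, hM, hMmax⟩ := 𝒞.exists_maximal hne
  refine ⟨M, hM, fun T hT => ?_⟩
  rcases eq_or_ne T M with rfl | hneq
  · exact subset_rfl
  · rcases hchain (Finset.mem_coe.mpr hT) (Finset.mem_coe.mpr hM) hneq with h | h
    · exact h
    · exact hMmax hT h

lemma retract_chain (hiso : ∀ v : V, ∃ u, G.Adj v u)
    (hC4 : ∀ u v : V, u ≠ v → ∀ w₁ w₂ : V,
      G.Adj u w₁ → G.Adj v w₁ → G.Adj u w₂ → G.Adj v w₂ → w₁ = w₂)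
    {𝒞 : Finset (Finset (V × Bool))} (h𝒞 : sdSimplex (BoxSimplex G) 𝒞) :
    BoxSimplex G (𝒞.sup (retractMap G)) ∧ (𝒞.sup (retractMap G)).card ≤ 2 := by
  classical
  obtain ⟨hmem, hchain⟩ := h𝒞
  rcases 𝒞.eq_empty_or_nonempty with rfl | hne
  · rw [Finset.sup_empty]
    have hbot : (⊥ : Finset (V × Bool)) = ∅ := rfl
    rw [hbot]
    refine ⟨⟨?_, ?_, ?_, ?_⟩, by simp⟩
    · rw [shore_empty]; exact disjoint_empty_left _
    · rw [shore_empty]; intro a ha; exact absurd ha (notMem_empty a)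
    · rw [shore_empty]; exact CN_nonempty_small hiso (by simp)
    · rw [shore_empty]; exact CN_nonempty_small hiso (by simp)
  obtain ⟨M, hM, hMtop⟩ := chain_top hne hchain
  have hMbox := (hmem M hM).1
  set S := 𝒞.sup (retractMap G) with hSdef
  by_cases hb1 : 2 ≤ (shore M false).card
  · -- Case: the false shore of the top is big
    have hA'' : ∀ T ∈ 𝒞, ¬ 2 ≤ (shore T true).card := by
      intro T hT
      have h1 : (shore T true).card ≤ (shore M true).card :=
        Finset.card_le_card (shore_mono (hMtop T hT) true)
      have h2 := not_both_big hC4 hMbox hb1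
      omega
    obtain ⟨w, hw⟩ := hMbox.2.2.1
    have hwuniq : ∀ T ∈ 𝒞, 2 ≤ (shore T false).card →
        ∀ x ∈ CN G (shore T false), x = w := fun T hT h2 x hx =>
      Finset.card_le_one.mp (CN_card_le_one hC4 h2) x hx w
        (CN_anti (shore_mono (hMtop T hT) false) hw)
    have hSfalse : ∀ v ∈ shore S false,
        ∃ T ∈ 𝒞, ¬ 2 ≤ (shore T false).card ∧ v ∈ shore T false := by
      intro v hv
      obtain ⟨T, hT, hvT⟩ := Finset.mem_sup.mp (mem_shore.mp hv)
      refine ⟨T, hT, ?_⟩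
      revert hvT
      unfold retractMap
      by_cases h2 : 2 ≤ (shore T false).card
      · rw [if_pos h2]
        intro hvT
        rcases mem_joinPair.mp hvT with ⟨_, h⟩ | ⟨h, _⟩
        · exact absurd h (notMem_empty v)
        · exact absurd h (by simp)
      · rw [if_neg h2, if_neg (hA'' T hT)]
        intro hvT
        exact ⟨h2, mem_shore.mpr hvT⟩
    have hU : shore S false ⊆ shore M false := by
      intro v hv
      obtain ⟨T, hT, _, hvT⟩ := hSfalse v hv
      exact shore_mono (hMtop T hT) false hvT
    have hUcard : (shore S false).card ≤ 1 := by
      apply Finset.card_le_one.mpr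
      intro x hx y hy
      obtain ⟨T₁, hT₁, hs₁, hx₁⟩ := hSfalse x hx
      obtain ⟨T₂, hT₂, hs₂, hy₂⟩ := hSfalse y hy
      rcases eq_or_ne T₁ T₂ with rfl | hneq
      · exact Finset.card_le_one.mp (by omega) x hx₁ y hy₂
      rcases hchain (Finset.mem_coe.mpr hT₁) (Finset.mem_coe.mpr hT₂) hneq with h | h
      · exact Finset.card_le_one.mp (by omega : (shore T₂ false).card ≤ 1) x
          (shore_mono h false hx₁) y hy₂
      · exact Finset.card_le_one.mp (by omega : (shore T₁ false).card ≤ 1) x hx₁ y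
          (shore_mono h false hy₂)
    have hStrue : shore S true = {w} := by
      apply Finset.Subset.antisymm
      · intro v hv
        obtain ⟨T, hT, hvT⟩ := Finset.mem_sup.mp (mem_shore.mp hv)
        rw [Finset.mem_singleton]
        revert hvT
        unfold retractMap
        by_cases h2 : 2 ≤ (shore T false).card
        · rw [if_pos h2]
          intro hvT
          rcases mem_joinPair.mp hvT with ⟨h, _⟩ | ⟨_, hv'⟩
          · exact absurd h (by simp)
          · exact hwuniq T hT h2 v hv'
        · rw [if_neg h2, if_neg (hA'' T hT)]
          intro hvT
          have hvM : v ∈ CN G (shore M false) :=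
            shore_true_subset_CN hMbox
              (shore_mono (hMtop T hT) true (mem_shore.mpr hvT))
          exact Finset.card_le_one.mp (CN_card_le_one hC4 hb1) v hvM w hw
      · intro v hv
        rw [Finset.mem_singleton] at hv
        subst hv
        apply mem_shore.mpr
        apply Finset.mem_sup.mpr
        refine ⟨M, hM, ?_⟩
        unfold retractMap
        rw [if_pos hb1]
        exact mem_joinPair.mpr (Or.inr ⟨rfl, hw⟩)
    refine ⟨⟨?_, ?_, ?_, ?_⟩, ?_⟩
    · rw [hStrue, Finset.disjoint_singleton_right]
      intro hwS
      exact G.irrefl (mem_CN.mp hw w (hU hwS))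
    · intro a ha b hb
      rw [hStrue, Finset.mem_singleton] at hb
      subst hb
      exact mem_CN.mp hw a (hU ha)
    · exact ⟨w, mem_CN.mpr fun a ha => mem_CN.mp hw a (hU ha)⟩
    · rw [hStrue]
      exact CN_nonempty_small hiso (by simp)
    · rw [← card_shores, hStrue, Finset.card_singleton]
      omega
  · by_cases hb2 : 2 ≤ (shore M true).card
    · -- Case: the true shore of the top is big
      have hA' : ∀ T ∈ 𝒞, ¬ 2 ≤ (shore T false).card := by
        intro T hT
        have h1 : (shore T false).card ≤ (shore M false).card :=
          Finset.card_le_card (shore_mono (hMtop T hT) false)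
        omega
      obtain ⟨w, hw⟩ := hMbox.2.2.2
      have hwuniq : ∀ T ∈ 𝒞, 2 ≤ (shore T true).card →
          ∀ x ∈ CN G (shore T true), x = w := fun T hT h2 x hx =>
        Finset.card_le_one.mp (CN_card_le_one hC4 h2) x hx w
          (CN_anti (shore_mono (hMtop T hT) true) hw)
      have hStrue' : ∀ v ∈ shore S true,
          ∃ T ∈ 𝒞, ¬ 2 ≤ (shore T true).card ∧ v ∈ shore T true := by
        intro v hv
        obtain ⟨T, hT, hvT⟩ := Finset.mem_sup.mp (mem_shore.mp hv)
        refine ⟨T, hT, ?_⟩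
        revert hvT
        unfold retractMap
        rw [if_neg (hA' T hT)]
        by_cases h2 : 2 ≤ (shore T true).card
        · rw [if_pos h2]
          intro hvT
          rcases mem_joinPair.mp hvT with ⟨h, _⟩ | ⟨_, h⟩
          · exact absurd h (by simp)
          · exact absurd h (notMem_empty v)
        · rw [if_neg h2]
          intro hvT
          exact ⟨h2, mem_shore.mpr hvT⟩
      have hU : shore S true ⊆ shore M true := by
        intro v hv
        obtain ⟨T, hT, _, hvT⟩ := hStrue' v hv
        exact shore_mono (hMtop T hT) true hvT
      have hUcard : (shore S true).card ≤ 1 := by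
        apply Finset.card_le_one.mpr
        intro x hx y hy
        obtain ⟨T₁, hT₁, hs₁, hx₁⟩ := hStrue' x hx
        obtain ⟨T₂, hT₂, hs₂, hy₂⟩ := hStrue' y hy
        rcases eq_or_ne T₁ T₂ with rfl | hneq
        · exact Finset.card_le_one.mp (by omega) x hx₁ y hy₂
        rcases hchain (Finset.mem_coe.mpr hT₁) (Finset.mem_coe.mpr hT₂) hneq with h | h
        · exact Finset.card_le_one.mp (by omega : (shore T₂ true).card ≤ 1) x
            (shore_mono h true hx₁) y hy₂
        · exact Finset.card_le_one.mp (by omega : (shore T₁ true).card ≤ 1) x hx₁ y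
            (shore_mono h true hy₂)
      have hSfalse : shore S false = {w} := by
        apply Finset.Subset.antisymm
        · intro v hv
          obtain ⟨T, hT, hvT⟩ := Finset.mem_sup.mp (mem_shore.mp hv)
          rw [Finset.mem_singleton]
          revert hvT
          unfold retractMap
          rw [if_neg (hA' T hT)]
          by_cases h2 : 2 ≤ (shore T true).card
          · rw [if_pos h2]
            intro hvT
            rcases mem_joinPair.mp hvT with ⟨_, hv'⟩ | ⟨h, _⟩
            · exact hwuniq T hT h2 v hv'
            · exact absurd h (by simp)
          · rw [if_neg h2]
            intro hvT
            have hvM : v ∈ CN G (shore M true) :=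
              shore_false_subset_CN hMbox
                (shore_mono (hMtop T hT) false (mem_shore.mpr hvT))
            exact Finset.card_le_one.mp (CN_card_le_one hC4 hb2) v hvM w hw
        · intro v hv
          rw [Finset.mem_singleton] at hv
          subst hv
          apply mem_shore.mpr
          apply Finset.mem_sup.mpr
          refine ⟨M, hM, ?_⟩
          unfold retractMap
          rw [if_neg hb1, if_pos hb2]
          exact mem_joinPair.mpr (Or.inl ⟨rfl, hw⟩)
      refine ⟨⟨?_, ?_, ?_, ?_⟩, ?_⟩
      · rw [hSfalse, Finset.disjoint_singleton_left]
        intro hwS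
        exact G.irrefl (mem_CN.mp hw w (hU hwS))
      · intro a ha b hb
        rw [hSfalse, Finset.mem_singleton] at ha
        subst ha
        exact (mem_CN.mp hw b (hU hb)).symm
      · rw [hSfalse]
        exact CN_nonempty_small hiso (by simp)
      · exact ⟨w, mem_CN.mpr fun a ha => mem_CN.mp hw a (hU ha)⟩
      · rw [← card_shores, hSfalse, Finset.card_singleton]
        omega
    · -- Case: all shores small; the retraction is the identity on the chain
      have hid : ∀ T ∈ 𝒞, retractMap G T = T := by
        intro T hT
        have h1 : (shore T false).card ≤ (shore M false).card :=
          Finset.card_le_card (shore_mono (hMtop T hT) false)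
        have h2 : (shore T true).card ≤ (shore M true).card :=
          Finset.card_le_card (shore_mono (hMtop T hT) true)
        unfold retractMap
        rw [if_neg (by omega), if_neg (by omega)]
      have hSM : S = M := by
        apply Finset.Subset.antisymm
        · intro p hp
          obtain ⟨T, hT, hpT⟩ := Finset.mem_sup.mp hp
          rw [hid T hT] at hpT
          exact hMtop T hT hpT
        · have := Finset.le_sup (f := retractMap G) hM
          rw [hid M hM] at this
          exact this
      rw [hSM]
      refine ⟨hMbox, ?_⟩
      rw [← card_shores]
      omega

end Helpers

/-- If `G` has no 4-cycle (equivalently, any two distinct vertices have at most one common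
neighbor), then the above map is a well-defined simplicial ℤ₂-map from `sd B(G)` to `B(G)`
whose image lies in a subcomplex of `B(G)` of dimension at most 1: each vertex of `sd B(G)`
is sent to a simplex of `B(G)` with at most 2 vertices, and each simplex of `sd B(G)`
(a chain) is carried to a simplex of `B(G)` with at most 2 vertices. -/
theorem sd_box_retract_of_C4free [Fintype V] [Nonempty V] (G : SimpleGraph V)
    (hiso : ∀ v : V, ∃ u, G.Adj v u)
    (hC4 : ∀ u v : V, u ≠ v → ∀ w₁ w₂ : V,
      G.Adj u w₁ → G.Adj v w₁ → G.Adj u w₂ → G.Adj v w₂ → w₁ = w₂) :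
    (∀ T : Finset (V × Bool), BoxSimplex G T → T.Nonempty →
      BoxSimplex G (retractMap G T) ∧ (retractMap G T).Nonempty ∧
        (retractMap G T).card ≤ 2) ∧
    (∀ T : Finset (V × Bool), BoxSimplex G T → T.Nonempty →
      retractMap G (swapFinset T) = swapFinset (retractMap G T)) ∧
    (∀ 𝒞 : Finset (Finset (V × Bool)), sdSimplex (BoxSimplex G) 𝒞 →
      BoxSimplex G (𝒞.sup (retractMap G)) ∧ (𝒞.sup (retractMap G)).card ≤ 2) := by
  exact ⟨fun T hT hne => retract_single hiso hC4 hT hne,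
    fun T hT _ => retract_equivariant hC4 hT,
    fun 𝒞 h𝒞 => retract_chain hiso hC4 h𝒞⟩
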